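/- Let v, w : ℕ → ℝ be non-negative functions and suppose there exists φ : ℕ₀ → ℝ with φ(n) ≥ 0 for all n, φ(n) > 0 for all n ≥ 1, such that for all n ≥ 1: (Δφ(n)) v(n) − (φ(n+1) − φ(n))(v(n+1) − v(n)) ≥ w(n) φ(n), where Δφ(n) := 2φ(n) − φ(n−1) − φ(n+1) for n ≥ 1. Then for every finitely supported function u : ℕ₀ → ℝ with u(0) = 0 one has ∑_{n=1}^∞ |u(n) − u(n−1)|² v(n) ≥ ∑_{n=1}^∞ w(n) |u(n)|². -/

import Mathlib

/-- Abel summation by parts for finite sums. -/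
lemma abel_aux (g f : ℕ → ℝ) (N : ℕ) :
    ∑ k ∈ Finset.range N, g (k + 1) * (f (k + 1) - f k) =
      ∑ k ∈ Finset.range N, (g (k + 1) - g (k + 2)) * f (k + 1)
        + g (N + 1) * f N - g 1 * f 0 := by
  induction N with
  | zero => simp
  | succ n ih =>
      rw [Finset.sum_range_succ, Finset.sum_range_succ, ih]
      ring

/-- Lemma 3.1: the discrete super-solution method. Here `Δφ(n) = 2φ(n) − φ(n−1) − φ(n+1)`
for `n ≥ 1` is the combinatorial Laplacian. -/
theorem discrete_supersolution_method (v w : ℕ → ℝ)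
    (hv : ∀ n : ℕ, 1 ≤ n → 0 ≤ v n) (hw : ∀ n : ℕ, 1 ≤ n → 0 ≤ w n)
    (φ : ℕ → ℝ) (hφ0 : ∀ n : ℕ, 0 ≤ φ n) (hφpos : ∀ n : ℕ, 1 ≤ n → 0 < φ n)
    (hsuper : ∀ n : ℕ, 1 ≤ n →
      (2 * φ n - φ (n - 1) - φ (n + 1)) * v n
        - (φ (n + 1) - φ n) * (v (n + 1) - v n) ≥ w n * φ n)
    (u : ℕ → ℝ) (hsupp : ∃ N : ℕ, ∀ n ≥ N, u n = 0) (h0 : u 0 = 0) :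
    ∑' n : ℕ, |u (n + 1) - u n| ^ 2 * v (n + 1) ≥
      ∑' n : ℕ, w (n + 1) * |u (n + 1)| ^ 2 := by
  obtain ⟨N, hN⟩ := hsupp
  set ψ : ℕ → ℝ := fun k => u k / φ k with hψdef
  have hψ : ∀ k, φ k * ψ k = u k := by
    intro k
    rcases Nat.eq_zero_or_pos k with rfl | hk
    · simp [ψ, h0]
    · simp only [ψ]
      field_simp [(hφpos k hk).ne']
  set f : ℕ → ℝ := fun k => φ k * (ψ k) ^ 2 with hfdef
  have hf0 : f 0 = 0 := by simp [f, ψ, h0]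
  have hfN : f N = 0 := by simp [f, ψ, hN N le_rfl]
  have hfnn : ∀ k, 0 ≤ f k := fun k => mul_nonneg (hφ0 k) (sq_nonneg _)
  set g : ℕ → ℝ := fun n => v n * (φ n - φ (n - 1)) with hgdef
  have tsum1 : ∑' n : ℕ, |u (n + 1) - u n| ^ 2 * v (n + 1)
      = ∑ k ∈ Finset.range N, |u (k + 1) - u k| ^ 2 * v (k + 1) := by
    apply tsum_eq_sum
    intro b hb
    rw [Finset.mem_range, not_lt] at hb
    rw [hN (b + 1) (by omega), hN b (by omega)]
    simp
  have tsum2 : ∑' n : ℕ, w (n + 1) * |u (n + 1)| ^ 2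
      = ∑ k ∈ Finset.range N, w (k + 1) * |u (k + 1)| ^ 2 := by
    apply tsum_eq_sum
    intro b hb
    rw [Finset.mem_range, not_lt] at hb
    rw [hN (b + 1) (by omega)]
    simp
  rw [tsum1, tsum2, ge_iff_le]
  have hgg : ∀ k : ℕ, w (k + 1) * φ (k + 1) ≤ g (k + 1) - g (k + 2) := by
    intro k
    have h := hsuper (k + 1) (by omega)
    simp only [Nat.add_sub_cancel] at h
    have e1 : g (k + 1) = v (k + 1) * (φ (k + 1) - φ k) := by
      simp [g]
    have e2 : g (k + 2) = v (k + 2) * (φ (k + 2) - φ (k + 1)) := by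
      simp [g]
    rw [e1, e2]
    nlinarith [h]
  calc ∑ k ∈ Finset.range N, w (k + 1) * |u (k + 1)| ^ 2
      ≤ ∑ k ∈ Finset.range N, (g (k + 1) - g (k + 2)) * f (k + 1) := by
        apply Finset.sum_le_sum
        intro k _
        have hu : φ (k + 1) * f (k + 1) = |u (k + 1)| ^ 2 := by
          rw [sq_abs, ← hψ (k + 1)]
          simp only [f]
          ring
        rw [← hu]
        have := mul_le_mul_of_nonneg_right (hgg k) (hfnn (k + 1))
        nlinarith [this]
    _ = ∑ k ∈ Finset.range N, g (k + 1) * (f (k + 1) - f k) := by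
        rw [abel_aux g f N, hf0, hfN]
        ring
    _ ≤ ∑ k ∈ Finset.range N, |u (k + 1) - u k| ^ 2 * v (k + 1) := by
        apply Finset.sum_le_sum
        intro k _
        have hv1 : 0 ≤ v (k + 1) := hv (k + 1) (by omega)
        have hφ1 : 0 ≤ φ (k + 1) := hφ0 (k + 1)
        have hφk : 0 ≤ φ k := hφ0 k
        have hid : |u (k + 1) - u k| ^ 2
            = (φ (k + 1) * ψ (k + 1) - φ k * ψ k) ^ 2 := by
          rw [sq_abs, hψ (k + 1), hψ k]
        have e1 : g (k + 1) = v (k + 1) * (φ (k + 1) - φ k) := by simp [g]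
        rw [hid, e1]
        simp only [f]
        nlinarith [mul_nonneg (mul_nonneg hv1 (mul_nonneg hφ1 hφk))
          (sq_nonneg (ψ (k + 1) - ψ k))]
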